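/- Let |ψ⟩ be an n-qubit pure state with |⟨ψ_n^+|ψ⟩|² = 1 − δ. For any two indices i ≠ j, let |ψ_i⟩ = Z_i|ψ⟩ and |ψ_j⟩ = Z_j|ψ⟩ (Pauli Z applied to the i-th resp. j-th qubit). Then |⟨ψ_i|ψ_j⟩| ≥ 1 − 2δ. -/

import Mathlib

open Matrix BigOperators

noncomputable section

/-- Pauli X matrix. -/
def pauliX : Matrix (Fin 2) (Fin 2) ℂ := !![0, 1; 1, 0]

/-- Pauli Y matrix. -/
def pauliY : Matrix (Fin 2) (Fin 2) ℂ := !![0, -Complex.I; Complex.I, 0]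

/-- Pauli Z matrix. -/
def pauliZ : Matrix (Fin 2) (Fin 2) ℂ := !![1, 0; 0, -1]

/-- Tensor product of `n` single-qubit operators, acting on `(ℂ²)^⊗n`
(realized as matrices indexed by bit strings `Fin n → Fin 2`). -/
def tensorOp {n : ℕ} (A : Fin n → Matrix (Fin 2) (Fin 2) ℂ) :
    Matrix (Fin n → Fin 2) (Fin n → Fin 2) ℂ :=
  fun b c => ∏ i, A i (b i) (c i)

/-- `O₀ = X^⊗n`. -/
def bellO0 (n : ℕ) : Matrix (Fin n → Fin 2) (Fin n → Fin 2) ℂ :=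
  tensorOp (fun _ => pauliX)

/-- `Oᵢ`: Pauli `Y` on qubits `i` and `i+1` (cyclically), Pauli `X` elsewhere. -/
def bellOi (n : ℕ) [NeZero n] (i : Fin n) :
    Matrix (Fin n → Fin 2) (Fin n → Fin 2) ℂ :=
  tensorOp (fun j => if j = i ∨ j = i + 1 then pauliY else pauliX)

/-- The Bell operator `O = O₀ − ∑ i, Oᵢ`. -/
def bellOp (n : ℕ) [NeZero n] : Matrix (Fin n → Fin 2) (Fin n → Fin 2) ℂ :=
  bellO0 n - ∑ i : Fin n, bellOi n i

/-- The GHZ state `|ψₙ⁺⟩ = (|0…0⟩ + |1…1⟩)/√2` as a vector. -/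
def ghzP (n : ℕ) : (Fin n → Fin 2) → ℂ := fun b =>
  if b = (fun _ => 0) then ((Real.sqrt 2)⁻¹ : ℂ)
  else if b = (fun _ => 1) then ((Real.sqrt 2)⁻¹ : ℂ) else 0

/-- The GHZ state `|ψₙ⁻⟩ = (|0…0⟩ − |1…1⟩)/√2` as a vector. -/
def ghzM (n : ℕ) : (Fin n → Fin 2) → ℂ := fun b =>
  if b = (fun _ => 0) then ((Real.sqrt 2)⁻¹ : ℂ)
  else if b = (fun _ => 1) then -((Real.sqrt 2)⁻¹ : ℂ) else 0

/-- The projector `|ψₙ⁺⟩⟨ψₙ⁺|`. -/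
def ghzProjP (n : ℕ) : Matrix (Fin n → Fin 2) (Fin n → Fin 2) ℂ :=
  vecMulVec (ghzP n) (fun b => (starRingEnd ℂ) (ghzP n b))

/-- The projector `|ψₙ⁻⟩⟨ψₙ⁻|`. -/
def ghzProjM (n : ℕ) : Matrix (Fin n → Fin 2) (Fin n → Fin 2) ℂ :=
  vecMulVec (ghzM n) (fun b => (starRingEnd ℂ) (ghzM n b))

/-- Computational basis state `|b⟩`. -/
def basisState {n : ℕ} (b : Fin n → Fin 2) : (Fin n → Fin 2) → ℂ :=
  fun c => if c = b then 1 else 0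

/-- Hadamard gate. -/
def hadamard : Matrix (Fin 2) (Fin 2) ℂ :=
  ((Real.sqrt 2)⁻¹ : ℂ) • !![1, 1; 1, -1]

lemma tensorZ_mulVec {n : ℕ} (i : Fin n) (ψ : (Fin n → Fin 2) → ℂ) (b : Fin n → Fin 2) :
    ((tensorOp (fun k => if k = i then pauliZ else 1)).mulVec ψ) b
    = (if b i = 1 then -1 else 1) * ψ b := by
  unfold Matrix.mulVec dotProduct tensorOp
  dsimp only
  rw [Finset.sum_eq_single b]
  · congr 1
    rw [Finset.prod_eq_single i]
    · simp only [if_pos rfl]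
      have hb : b i = 0 ∨ b i = 1 := by omega
      rcases hb with h | h <;> simp [h, pauliZ]
    · intro k _ hk
      simp [hk, Matrix.one_apply_eq]
    · simp
  · intro c _ hc
    have : ∃ k, b k ≠ c k := by
      by_contra h
      push_neg at h
      exact hc ((funext h : b = c).symm)
    obtain ⟨k, hk⟩ := this
    rw [Finset.prod_eq_zero (Finset.mem_univ k)]
    · ring
    · by_cases hki : k = i
      · subst hki
        have h1 : b k = 0 ∨ b k = 1 := by omega
        have h2 : c k = 0 ∨ c k = 1 := by omega
        rcases h1 with h1 | h1 <;> rcases h2 with h2 | h2 <;>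
          simp_all [pauliZ]
      · simp [hki, Matrix.one_apply_ne hk]
  · simp


/-- If `|⟨ψₙ⁺|ψ⟩|² = 1 − δ`, then for any `i ≠ j` the states `Zᵢ|ψ⟩` and `Zⱼ|ψ⟩`
have overlap at least `1 − 2δ`. -/
theorem phase_flip_overlap (n : ℕ) (δ : ℝ) (ψ : (Fin n → Fin 2) → ℂ)
    (hψ : ∑ b, Complex.normSq (ψ b) = 1)
    (hfid : (‖∑ b, (starRingEnd ℂ) (ghzP n b) * ψ b‖) ^ 2 = 1 - δ)
    (i j : Fin n) (hij : i ≠ j) :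
    1 - 2 * δ ≤
      ‖∑ b,
        (starRingEnd ℂ) (((tensorOp (fun k => if k = i then pauliZ else 1)).mulVec ψ) b) *
          ((tensorOp (fun k => if k = j then pauliZ else 1)).mulVec ψ) b‖ := by
  have hne : (fun _ => (0:Fin 2) : Fin n → Fin 2) ≠ (fun _ => 1) := fun h => by
    simpa using congrFun h i
  -- the summand simplifies to a signed normSq
  have hterm : ∀ b : Fin n → Fin 2,
      (starRingEnd ℂ) (((tensorOp (fun k => if k = i then pauliZ else 1)).mulVec ψ) b) *
        ((tensorOp (fun k => if k = j then pauliZ else 1)).mulVec ψ) b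
      = (((if b i = b j then (1:ℝ) else -1) * Complex.normSq (ψ b) : ℝ) : ℂ) := by
    intro b
    rw [tensorZ_mulVec, tensorZ_mulVec]
    have hc : (starRingEnd ℂ) (ψ b) * ψ b = (Complex.normSq (ψ b) : ℂ) := by
      rw [mul_comm, Complex.mul_conj]
    have hi2 : b i = 0 ∨ b i = 1 := by omega
    have hj2 : b j = 0 ∨ b j = 1 := by omega
    rcases hi2 with hi2 | hi2 <;> rcases hj2 with hj2 | hj2 <;>
      simp only [hi2, hj2, (by decide : ((0:Fin 2) = 1) = False),
        (by decide : ((1:Fin 2) = 1) = True), (by decide : ((0:Fin 2) = 0) = True),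
        (by decide : ((1:Fin 2) = 0) = False), if_true, if_false,
        _root_.map_mul, _root_.map_one, map_neg,
        one_mul, neg_mul, mul_neg, neg_neg] <;>
      first
        | linear_combination (norm := (push_cast; ring1)) hc
        | linear_combination (norm := (push_cast; ring1)) (-hc)
  rw [Finset.sum_congr rfl (fun b _ => hterm b), ← Complex.ofReal_sum,
    Complex.norm_real, Real.norm_eq_abs]
  set R : ℝ := ∑ b, (if b i = b j then (1:ℝ) else -1) * Complex.normSq (ψ b) with hR
  refine le_trans ?_ (le_abs_self R)
  set T : ℝ := ∑ b ∈ Finset.univ.filter (fun b => b i = b j), Complex.normSq (ψ b) with hT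
  set S : ℝ := ∑ b ∈ Finset.univ.filter (fun b => ¬ b i = b j), Complex.normSq (ψ b) with hS
  have hRTS : R = T - S := by
    rw [hR]
    rw [Finset.sum_congr rfl (fun b _ => by
      show (if b i = b j then (1:ℝ) else -1) * Complex.normSq (ψ b)
        = if b i = b j then Complex.normSq (ψ b) else -Complex.normSq (ψ b)
      split <;> ring)]
    rw [Finset.sum_ite, hT, hS]
    rw [Finset.sum_neg_distrib]
    ring
  have hTS1 : T + S = 1 := by
    rw [hT, hS, Finset.sum_filter_add_sum_filter_not, hψ]
  -- fidelity computation
  have hF : (∑ b, (starRingEnd ℂ) (ghzP n b) * ψ b)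
      = ((Real.sqrt 2)⁻¹ : ℂ) * ψ (fun _ => 0) + ((Real.sqrt 2)⁻¹ : ℂ) * ψ (fun _ => 1) := by
    have hpt : ∀ b, (starRingEnd ℂ) (ghzP n b) * ψ b =
        (if b = (fun _ => 0) then ((Real.sqrt 2)⁻¹:ℂ) * ψ b else 0) +
        (if b = (fun _ => 1) then ((Real.sqrt 2)⁻¹:ℂ) * ψ b else 0) := by
      intro b
      unfold ghzP
      by_cases h0 : b = (fun _ => 0)
      · have h1 : b ≠ (fun _ => 1) := h0 ▸ hne
        simp [h0, h1, hne, Complex.conj_ofReal]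
      · by_cases h1 : b = (fun _ => 1) <;>
          simp [h0, h1, hne.symm, Complex.conj_ofReal]
    rw [Finset.sum_congr rfl (fun b _ => hpt b), Finset.sum_add_distrib]
    rw [Finset.sum_ite_eq' Finset.univ (fun _ => (0:Fin 2)) (fun b => ((Real.sqrt 2)⁻¹:ℂ) * ψ b),
      Finset.sum_ite_eq' Finset.univ (fun _ => (1:Fin 2)) (fun b => ((Real.sqrt 2)⁻¹:ℂ) * ψ b)]
    simp
  -- bound: 1 - δ ≤ normSq a + normSq c
  have hbound : 1 - δ ≤ Complex.normSq (ψ (fun _ => 0)) + Complex.normSq (ψ (fun _ => 1)) := by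
    rw [← hfid, Complex.sq_norm, hF]
    set a := ψ (fun _ => 0); set c := ψ (fun _ => 1)
    have hr : Complex.normSq (((Real.sqrt 2)⁻¹ : ℝ) : ℂ) = 1/2 := by
      rw [Complex.normSq_ofReal, ← Real.sqrt_inv]
      rw [Real.mul_self_sqrt (by norm_num)]
      norm_num
    have hcast : (((Real.sqrt 2))⁻¹ : ℂ) = (((Real.sqrt 2)⁻¹ : ℝ) : ℂ) := by
      push_cast; ring
    have expand : Complex.normSq ((((Real.sqrt 2))⁻¹ : ℂ) * a + (((Real.sqrt 2))⁻¹ : ℂ) * c)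
        = (1/2) * Complex.normSq (a + c) := by
      rw [← mul_add, Complex.normSq_mul, hcast, hr]
    rw [expand]
    have hpar : Complex.normSq (a + c) ≤ 2 * (Complex.normSq a + Complex.normSq c) := by
      simp only [Complex.normSq_apply, Complex.add_re, Complex.add_im]
      nlinarith [sq_nonneg (a.re - c.re), sq_nonneg (a.im - c.im)]
    linarith
  -- normSq a + normSq c ≤ T
  have hsubT : Complex.normSq (ψ (fun _ => 0)) + Complex.normSq (ψ (fun _ => 1)) ≤ T := by
    have hmem : ({(fun _ => 0), (fun _ => 1)} : Finset (Fin n → Fin 2)) ⊆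
        Finset.univ.filter (fun b => b i = b j) := by
      intro b hb
      simp only [Finset.mem_insert, Finset.mem_singleton] at hb
      rcases hb with hb | hb <;> subst hb <;> simp
    have hpair : ∑ b ∈ ({(fun _ => 0), (fun _ => 1)} : Finset (Fin n → Fin 2)),
        Complex.normSq (ψ b)
        = Complex.normSq (ψ (fun _ => 0)) + Complex.normSq (ψ (fun _ => 1)) := by
      rw [Finset.sum_pair hne]
    rw [← hpair]
    exact Finset.sum_le_sum_of_subset_of_nonneg hmem
      (fun _ _ _ => Complex.normSq_nonneg _)
  linarith [hRTS, hTS1]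


end
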